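/- Let k be an algebraically closed field of characteristic 2 and let a₉, a₁₀, a₁₄, a₁₈ ∈ k[t] with deg a₉ ≤ 9, deg a₁₀ ≤ 10, deg a₁₄ ≤ 14, deg a₁₈ ≤ 18. Then the set of triples (b₄, b₅, b₉) of polynomials in k[t] with deg b₄ ≤ 4, deg b₅ ≤ 5, deg b₉ ≤ 9 for which there exist a₄′, a₃′, A₁₄ ∈ k[t] with deg a₄′ ≤ 4, deg a₃′ ≤ 3, deg A₁₄ ≤ 14 satisfying the identity (y + b₅·x + b₉)² + a₉·(y + b₅·x + b₉) + t·(x + b₄)⁴ + a₁₀·(x + b₄)² + a₁₄·(x + b₄) + a₁₈ = y² + a₉·y + t·x⁴ + t·a₄′²·x² + A₁₄·x + t³·a₃′⁴ in k[t][x, y], is a finite set. -/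

import Mathlib

open Polynomial

set_option linter.unusedSectionVars false
set_option maxHeartbeats 1000000

namespace NormalFormAux

variable {k : Type*} [Field k] [CharP k 2]

noncomputable def ee (f : k[X]) : k[X] := contract 2 f
noncomputable def so (f : k[X]) : k[X] := contract 2 f.divX
noncomputable def ph (f : k[X]) : k[X] := f.map (frobenius k 2)

lemma coeff_ee (f : k[X]) (n : ℕ) : (ee f).coeff n = f.coeff (2*n) := by
  rw [ee, coeff_contract two_ne_zero, mul_comm]
lemma coeff_so (f : k[X]) (n : ℕ) : (so f).coeff n = f.coeff (2*n+1) := by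
  rw [so, coeff_contract two_ne_zero, coeff_divX]; ring_nf
lemma ee_add (f g : k[X]) : ee (f + g) = ee f + ee g := by
  ext n; simp [coeff_ee, coeff_add]
lemma so_add (f g : k[X]) : so (f + g) = so f + so g := by
  ext n; simp [coeff_so, coeff_add]
lemma ee_smul (c : k) (f : k[X]) : ee (c • f) = c • ee f := by
  ext n; simp [coeff_ee, coeff_smul]
lemma so_smul (c : k) (f : k[X]) : so (c • f) = c • so f := by
  ext n; simp [coeff_so, coeff_smul]

lemma coeff_X_mul' (g : k[X]) (n : ℕ) : (X * g).coeff n = if n = 0 then 0 else g.coeff (n-1) := by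
  cases n with
  | zero => simp [mul_coeff_zero]
  | succ m => simp [coeff_X_mul]

lemma decomp (f : k[X]) : f = expand k 2 (ee f) + X * expand k 2 (so f) := by
  ext n
  rw [coeff_add, coeff_expand (by norm_num : 0 < 2), coeff_X_mul']
  rcases Nat.even_or_odd n with ⟨m, rfl⟩ | ⟨m, rfl⟩
  · have h2 : (2:ℕ) ∣ m + m := ⟨m, by ring⟩
    rw [if_pos h2, coeff_ee]
    rcases Nat.eq_zero_or_pos (m+m) with h | h
    · simp [h]
    · rw [if_neg (by omega), coeff_expand (by norm_num : 0 < 2), if_neg (by omega)]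
      rw [add_zero]; congr 1; omega
  · have h2 : ¬ (2:ℕ) ∣ 2*m + 1 := by omega
    rw [if_neg h2, if_neg (by omega), coeff_expand (by norm_num : 0 < 2),
      if_pos (by omega : (2:ℕ) ∣ 2*m+1-1), coeff_so]
    rw [zero_add]; congr 1; omega

lemma split_zero {g h : k[X]} (H : expand k 2 g + X * expand k 2 h = 0) : g = 0 ∧ h = 0 := by
  constructor <;> ext n
  · have := congrArg (fun f => Polynomial.coeff f (2*n)) H
    simp only [coeff_add, coeff_expand (by norm_num : 0 < 2), coeff_X_mul', coeff_zero] at this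
    rcases Nat.eq_zero_or_pos n with rfl | h
    · simpa using this
    · rw [if_pos (show (2:ℕ) ∣ 2*n from ⟨n, by ring⟩)] at this
      rw [if_neg (show ¬ (2*n = 0) by omega), if_neg (show ¬ (2:ℕ) ∣ 2*n-1 by omega),
        add_zero, (show 2*n/2 = n by omega)] at this
      simpa using this
  · have := congrArg (fun f => Polynomial.coeff f (2*n+1)) H
    simp only [coeff_add, coeff_expand (by norm_num : 0 < 2), coeff_X_mul', coeff_zero] at this
    rw [if_neg (show ¬ (2:ℕ) ∣ 2*n+1 by omega), if_neg (show ¬ (2*n+1 = 0) by omega),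
      zero_add, (show (2*n+1-1)/2 = n by omega)] at this
    simpa using this

lemma ph_add (f g : k[X]) : ph (f+g) = ph f + ph g := Polynomial.map_add _
lemma ph_smul (c : k) (f : k[X]) : ph (c • f) = (c*c) • ph f := by
  simp only [ph, smul_eq_C_mul, Polynomial.map_mul, map_C, frobenius_def]
  rw [pow_two]
lemma ph_inj : Function.Injective (ph (k := k)) := by
  have : Function.Injective (frobenius k 2) := frobenius_inj k 2
  exact fun f g h => Polynomial.map_injective _ this h
lemma ph_zero : ph (0 : k[X]) = 0 := Polynomial.map_zero _
lemma sq_eq_expand (f : k[X]) : f^2 = expand k 2 (ph f) := by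
  haveI : ExpChar k 2 := ExpChar.prime Nat.prime_two
  rw [ph, ← map_expand, map_frobenius_expand]
lemma ph_expand (f : k[X]) : ph (expand k 2 f) = expand k 2 (ph f) := by
  rw [ph, ph, map_expand]
lemma ph_natDegree_le (f : k[X]) : (ph f).natDegree ≤ f.natDegree :=
  natDegree_map_le

instance polyCharP2 : CharP k[X] 2 := charP_of_injective_ringHom Polynomial.C_injective 2

lemma flip2 {a b : k[X]} (h : a + b = 0) : a = b := by
  rw [eq_neg_of_add_eq_zero_left h, CharTwo.neg_eq]

noncomputable def eeL : k[X] →ₗ[k] k[X] :=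
  { toFun := ee, map_add' := ee_add, map_smul' := ee_smul }
noncomputable def soL : k[X] →ₗ[k] k[X] :=
  { toFun := so, map_add' := so_add, map_smul' := so_smul }

abbrev MM (k : Type*) [Field k] := k[X] × k[X] × k[X] × k[X]

section Lmaps
variable (p' q' r' s' u' v' : k[X])
noncomputable def pi1 : MM k →ₗ[k] k[X] := LinearMap.fst k k[X] _
noncomputable def pi2 : MM k →ₗ[k] k[X] :=
  (LinearMap.fst k k[X] _).comp (LinearMap.snd k k[X] _)
noncomputable def pi3 : MM k →ₗ[k] k[X] :=
  ((LinearMap.fst k k[X] _).comp (LinearMap.snd k k[X] _)).comp (LinearMap.snd k k[X] _)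
noncomputable def lmJ : MM k →ₗ[k] k[X] :=
  (LinearMap.mulLeft k q').comp (eeL.comp pi1) + (LinearMap.mulLeft k p').comp (soL.comp pi1)
  + (LinearMap.mulLeft k s').comp pi3
  + (LinearMap.mulLeft k v').comp (eeL.comp pi2) + (LinearMap.mulLeft k u').comp (soL.comp pi2)
noncomputable def lm1 : MM k →ₗ[k] k[X] :=
  (LinearMap.mulLeft k p').comp (eeL.comp pi1)
  + (LinearMap.mulLeft k X).comp ((LinearMap.mulLeft k q').comp (soL.comp pi1))
  + (LinearMap.mulLeft k r').comp pi3
  + (LinearMap.mulLeft k u').comp (eeL.comp pi2)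
  + (LinearMap.mulLeft k X).comp ((LinearMap.mulLeft k v').comp (soL.comp pi2))
noncomputable def bigL : MM k →ₗ[k] MM k :=
  (lm1 p' q' r' u' v').prod ((pi3).prod
    ((eeL.comp (lmJ p' q' s' u' v')).prod (soL.comp (lmJ p' q' s' u' v'))))
lemma bigL_apply (w : MM k) :
    bigL p' q' r' s' u' v' w =
      (p' * ee w.1 + X * (q' * so w.1) + r' * w.2.2.1 + u' * ee w.2.1 + X * (v' * so w.2.1),
       w.2.2.1,
       ee (q' * ee w.1 + p' * so w.1 + s' * w.2.2.1 + v' * ee w.2.1 + u' * so w.2.1),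
       so (q' * ee w.1 + p' * so w.1 + s' * w.2.2.1 + v' * ee w.2.1 + u' * so w.2.1)) := rfl
end Lmaps

lemma key_step (a9 a10 a14 d b e' : k[X])
    (h : d^2 + a9*d + a10*b^2 + a14*b + X*b^4 + X^3*e'^4 = 0) :
    (ph d, ph b, ph (ph b), ph (ph e')) =
      bigL (ee a9) (so a9) (ee a10) (so a10) (ee a14) (so a14) (d, b, ph b, ph e') := by
  have hd2 : d^2 = expand k 2 (ph d) := sq_eq_expand d
  have hb2 : b^2 = expand k 2 (ph b) := sq_eq_expand b
  have hb4 : b^4 = expand k 2 (expand k 2 (ph (ph b))) := by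
    have h4 : b^4 = (b^2)^2 := by ring
    rw [h4, hb2, sq_eq_expand, ph_expand]
  have he4 : e'^4 = expand k 2 (expand k 2 (ph (ph e'))) := by
    have h4 : e'^4 = (e'^2)^2 := by ring
    rw [h4, sq_eq_expand e', sq_eq_expand, ph_expand]
  have hdd := decomp d
  have hbb := decomp b
  have ha9 := decomp a9
  have ha10 := decomp a10
  have ha14 := decomp a14
  set G : k[X] := ph d + (ee a9 * ee d + X*(so a9 * so d) + ee a10 * ph b
      + ee a14 * ee b + X*(so a14 * so b)) with hG
  set J : k[X] := so a9 * ee d + ee a9 * so d + so a10 * ph b + so a14 * ee b + ee a14 * so b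
    with hJdef
  set H : k[X] := J + (expand k 2 (ph (ph b)) + X * expand k 2 (ph (ph e'))) with hH
  have main : expand k 2 G + X * expand k 2 H
      = d^2 + a9*d + a10*b^2 + a14*b + X*b^4 + X^3*e'^4 := by
    have htwo : (2 : k[X]) = 0 := CharTwo.two_eq_zero
    rw [hd2, hb2, hb4, he4, hG, hH, hJdef]
    simp only [map_add, map_mul, expand_X]
    linear_combination (d : k[X]) * ha9
      + (expand k 2 (ee a9) + X * expand k 2 (so a9)) * hdd
      + expand k 2 (ph b) * ha10
      + (b : k[X]) * ha14
      + (expand k 2 (ee a14) + X * expand k 2 (so a14)) * hbb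
      + (expand k 2 (ee a9) * expand k 2 (ee d) + expand k 2 (ee a9) * X * expand k 2 (so d)
        + expand k 2 (ee d) * X * expand k 2 (so a9) + X * expand k 2 (ph b) * expand k 2 (so a10)
        + X * expand k 2 (ee a14) * expand k 2 (so b) + X * expand k 2 (ee b) * expand k 2 (so a14)
        + X^2 * expand k 2 (so a9) * expand k 2 (so d) + X^2 * expand k 2 (so a14) * expand k 2 (so b)
        + (expand k 2 (ee a10) * expand k 2 (ph b) - expand k 2 (ph b) * a10)
        + expand k 2 (ee a14) * expand k 2 (ee b) - d * a9 - b * a14) * htwo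
  obtain ⟨hGz, hHz⟩ := split_zero (by rw [main, h])
  have h1 : ph d = ee a9 * ee d + X*(so a9 * so d) + ee a10 * ph b
      + ee a14 * ee b + X*(so a14 * so b) := by
    apply flip2
    rw [hG] at hGz
    linear_combination hGz
  have hJ := decomp J
  have hsplit2 : expand k 2 (ee J + ph (ph b)) + X * expand k 2 (so J + ph (ph e')) = 0 := by
    simp only [map_add]
    rw [hH] at hHz
    linear_combination hHz - hJ
  obtain ⟨h3', h4'⟩ := split_zero hsplit2
  have h3 : ph (ph b) = ee J := (flip2 h3').symm
  have h4 : ph (ph e') = so J := (flip2 h4').symm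
  rw [bigL_apply]
  simp only [Prod.mk.injEq]
  refine ⟨h1, ?_, ?_, ?_⟩ <;>
    first
      | trivial
      | rfl
      | (rw [← hJdef]; first | exact h3 | exact h4)

noncomputable def tauM : MM k →+ MM k where
  toFun w := (ph w.1, ph w.2.1, ph w.2.2.1, ph w.2.2.2)
  map_zero' := by simp [ph_zero]
  map_add' w w' := by
    simp only [Prod.fst_add, Prod.snd_add, ph_add, Prod.mk_add_mk]

lemma tauM_smul (c : k) (w : MM k) : tauM (c • w) = (c*c) • tauM w := by
  simp only [tauM, AddMonoidHom.coe_mk, ZeroHom.coe_mk, Prod.smul_fst, Prod.smul_snd,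
    ph_smul, Prod.smul_mk]

lemma tauM_inj : Function.Injective (tauM (k := k)) := by
  intro w w' h
  simp only [tauM, AddMonoidHom.coe_mk, ZeroHom.coe_mk, Prod.mk.injEq] at h
  obtain ⟨h1, h2, h3, h4⟩ := h
  exact Prod.ext (ph_inj h1) (Prod.ext (ph_inj h2) (Prod.ext (ph_inj h3) (ph_inj h4)))

-- product of submodules equiv, for finite-dimensionality
noncomputable def prodSubEquiv {A B : Type*} [AddCommGroup A] [AddCommGroup B]
    [Module k A] [Module k B] (p : Submodule k A) (q : Submodule k B) :
    ↥(p.prod q) ≃ₗ[k] ↥p × ↥q where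
  toFun x := (⟨x.1.1, x.2.1⟩, ⟨x.1.2, x.2.2⟩)
  invFun y := ⟨(y.1.1, y.2.1), ⟨y.1.2, y.2.2⟩⟩
  left_inv x := rfl
  right_inv y := rfl
  map_add' x y := rfl
  map_smul' c x := rfl

instance fd_degreeLT (n : ℕ) : FiniteDimensional k ↥(degreeLT k n) :=
  Module.Finite.equiv (degreeLTEquiv k n).symm

instance fd_prod {A B : Type*} [AddCommGroup A] [AddCommGroup B]
    [Module k A] [Module k B] (p : Submodule k A) (q : Submodule k B)
    [FiniteDimensional k ↥p] [FiniteDimensional k ↥q] :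
    FiniteDimensional k ↥(p.prod q) :=
  Module.Finite.equiv (prodSubEquiv p q).symm

noncomputable def VV : Submodule k (MM k) :=
  (degreeLT k 10).prod ((degreeLT k 5).prod ((degreeLT k 5).prod (degreeLT k 4)))

instance : FiniteDimensional k ↥(VV (k := k)) := fd_prod _ _

lemma mem_VV {w : MM k} (h1 : w.1.natDegree ≤ 9) (h2 : w.2.1.natDegree ≤ 4)
    (h3 : w.2.2.1.natDegree ≤ 4) (h4 : w.2.2.2.natDegree ≤ 3) : w ∈ VV (k := k) := by
  have key : ∀ (f : k[X]) (n m : ℕ), f.natDegree ≤ n → n < m → f ∈ degreeLT k m := by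
    intro f n m hf hnm
    rw [mem_degreeLT]
    calc f.degree ≤ f.natDegree := degree_le_natDegree
    _ < m := by exact_mod_cast lt_of_le_of_lt hf hnm
  exact ⟨key _ 9 10 h1 (by norm_num), key _ 4 5 h2 (by norm_num),
    key _ 4 5 h3 (by norm_num), key _ 3 4 h4 (by norm_num)⟩

section WithAlgClosed
variable [IsAlgClosed k]

lemma sol_finite {M : Type*} [AddCommGroup M] [Module k M]
    (τ : M →+ M) (hsm : ∀ (c : k) (x : M), τ (c • x) = (c*c) • τ x)
    (hinj : Function.Injective τ)
    (L : M →ₗ[k] M) (V : Submodule k M) [FiniteDimensional k ↥V] :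
    {w : M | τ w = L w ∧ w ∈ V}.Finite := by
  classical
  set S : Set M := {w : M | τ w = L w ∧ w ∈ V} with hS
  -- square roots
  have hrt : ∀ c : k, ∃ r : k, r * r = c := by
    intro c
    obtain ⟨r, hr⟩ := IsAlgClosed.exists_pow_nat_eq c (n := 2) two_pos
    exact ⟨r, by rw [← pow_two]; exact hr⟩
  choose rt hrt using hrt
  have hsq1 : ∀ r : k, r * r = 1 → r = 1 := by
    intro r hr
    have : frobenius k 2 r = frobenius k 2 1 := by
      simp [frobenius_def, pow_two, hr]
    exact frobenius_inj k 2 this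
  -- char two module facts
  have h2k : (2 : k) = 0 := CharTwo.two_eq_zero
  have hmm : ∀ x : M, x + x = 0 := by
    intro x
    have : ((2 : k)) • x = x + x := by rw [two_smul]
    rw [← this, h2k, zero_smul]
  -- the key claim
  have claim : ∀ N (A : Finset M), A.card = N → ↑A ⊆ S → ∀ c : M → k,
      (∀ x ∈ A, c x ≠ 0) → ∑ x ∈ A, c x • x = 0 → A.Nonempty →
      ∃ B ⊆ A, B.Nonempty ∧ ∑ x ∈ B, x = 0 := by
    intro N
    induction N using Nat.strong_induction_on with
    | _ N ih =>
      intro A hcard hAS c hc hsum hA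
      obtain ⟨a₀, ha₀⟩ := hA
      set c' : M → k := fun x => (c a₀)⁻¹ * c x with hc'
      have hc'0 : ∀ x ∈ A, c' x ≠ 0 := fun x hx =>
        mul_ne_zero (inv_ne_zero (hc a₀ ha₀)) (hc x hx)
      have hc'a₀ : c' a₀ = 1 := inv_mul_cancel₀ (hc a₀ ha₀)
      have hsum' : ∑ x ∈ A, c' x • x = 0 := by
        have : ∑ x ∈ A, c' x • x = (c a₀)⁻¹ • ∑ x ∈ A, c x • x := by
          rw [Finset.smul_sum]
          exact Finset.sum_congr rfl fun x _ => by rw [smul_smul]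
        rw [this, hsum, smul_zero]
      -- derived relation with square roots
      have hder : ∑ x ∈ A, rt (c' x) • x = 0 := by
        apply hinj
        rw [map_zero, map_sum]
        have : ∀ x ∈ A, τ (rt (c' x) • x) = c' x • L x := by
          intro x hx
          rw [hsm, hrt, (hAS hx).1]
        rw [Finset.sum_congr rfl this]
        have : ∑ x ∈ A, c' x • L x = L (∑ x ∈ A, c' x • x) := by
          rw [map_sum]
          exact Finset.sum_congr rfl fun x _ => (L.map_smul _ _).symm
        rw [this, hsum', map_zero]
      set d : M → k := fun x => c' x - rt (c' x) with hd
      have hdsum : ∑ x ∈ A, d x • x = 0 := by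
        have : ∀ x ∈ A, d x • x = c' x • x - rt (c' x) • x := fun x _ => sub_smul _ _ _
        rw [Finset.sum_congr rfl this, Finset.sum_sub_distrib, hsum', hder, sub_zero]
      set A' : Finset M := A.filter (fun x => d x ≠ 0) with hA'
      have hrt1 : rt (1:k) = 1 := hsq1 _ (hrt 1)
      have hda₀ : d a₀ = 0 := by
        rw [hd]; simp [hc'a₀, hrt1]
      by_cases hA'ne : A'.Nonempty
      · have hsub : A' ⊆ A := Finset.filter_subset _ _
        have hss : A' ⊂ A := by
          refine Finset.ssubset_iff_of_subset hsub |>.mpr ⟨a₀, ha₀, ?_⟩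
          simp [hA', hda₀]
        have hcard' : A'.card < N := hcard ▸ Finset.card_lt_card hss
        have hsum'' : ∑ x ∈ A', d x • x = 0 := by
          have heq := Finset.sum_filter_of_ne (s := A) (f := fun x => d x • x)
            (p := fun x => d x ≠ 0) (fun x hx h hd0 => h (by simp [hd0]))
          rw [hA', heq]; exact hdsum
        have hd0 : ∀ x ∈ A', d x ≠ 0 := fun x hx => (Finset.mem_filter.mp hx).2
        obtain ⟨B, hBA', hBne, hBsum⟩ :=
          ih A'.card hcard' A' rfl (fun x hx => hAS (hsub hx)) d hd0 hsum'' hA'ne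
        exact ⟨B, hBA'.trans hsub, hBne, hBsum⟩
      · -- all d x = 0, so all c' x = 1
        have hone : ∀ x ∈ A, c' x = 1 := by
          intro x hx
          have hdx : d x = 0 := by
            by_contra hdx
            exact hA'ne ⟨x, Finset.mem_filter.mpr ⟨hx, hdx⟩⟩
          have h1 : c' x = rt (c' x) := sub_eq_zero.mp hdx
          have h2 := hrt (c' x)
          rw [← h1] at h2
          exact mul_right_cancel₀ (hc'0 x hx) (by rw [h2, one_mul])
        refine ⟨A, le_refl _, ⟨a₀, ha₀⟩, ?_⟩
        rw [← hsum']
        exact Finset.sum_congr rfl fun x hx => by rw [hone x hx, one_smul]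
  -- choose an independent spanning subset of S
  obtain ⟨b, hbS, hbspan, hbind⟩ := exists_linearIndependent k S
  -- b is finite
  have hbV : b ⊆ ↑V := fun x hx => (hbS hx).2
  have hbfin : b.Finite := by
    set b' : Set ↥V := {x : ↥V | ↑x ∈ b} with hb'
    have hind' : LinearIndependent k ((↑) : b' → ↥V) := by
      rw [show ((↑) : b' → ↥V) = fun x => x.1 from rfl]
      apply LinearIndependent.of_comp (V.subtype)
      have : (V.subtype ∘ fun (x : b') => x.1) =
          ((↑) : b → M) ∘ (fun x : b' => (⟨(x.1 : M), x.2⟩ : b)) := rfl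
      rw [this]
      refine hbind.comp _ (fun x y hxy => ?_)
      simp only [Subtype.mk.injEq] at hxy
      exact Subtype.ext (Subtype.ext hxy)
    have hb'fin : b'.Finite := hind'.set_finite_of_isNoetherian
    have : b = Subtype.val '' b' := by
      ext x; constructor
      · intro hx; exact ⟨⟨x, hbV hx⟩, hx, rfl⟩
      · rintro ⟨y, hy, rfl⟩; exact hy
    rw [this]; exact hb'fin.image _
  set bF : Finset M := hbfin.toFinset with hbF
  have hbFb : ↑bF = b := hbfin.coe_toFinset
  apply Set.Finite.subset (bF.powerset.image (fun B => ∑ x ∈ B, x)).finite_toSet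
  intro w hw
  rw [Finset.coe_image, Set.mem_image]
  have hwspan : w ∈ Submodule.span k b := by
    rw [hbspan]; exact Submodule.subset_span hw
  have hwspan' : w ∈ Submodule.span k (↑bF : Set M) := by rwa [hbFb]
  obtain ⟨c, -, hc⟩ := Submodule.mem_span_finset.mp hwspan'
  by_cases hwb : w ∈ bF
  · exact ⟨{w}, by
      simp only [Finset.coe_powerset, Set.mem_preimage, Set.mem_powerset_iff,
        Finset.coe_singleton, Set.singleton_subset_iff, Finset.mem_coe]
      exact hwb, Finset.sum_singleton _ _⟩
  · set Af : Finset M := bF.filter (fun x => c x ≠ 0) with hAf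
    have hwAf : w ∉ Af := fun h => hwb (Finset.filter_subset _ _ h)
    set A : Finset M := insert w Af with hA
    set cc : M → k := fun x => if x = w then 1 else c x with hcc
    have hccne : ∀ x ∈ A, cc x ≠ 0 := by
      intro x hx
      rcases Finset.mem_insert.mp hx with rfl | hx'
      · simp [hcc]
      · have hxw : x ≠ w := fun h => hwAf (h ▸ hx')
        simp only [hcc, if_neg hxw]
        exact (Finset.mem_filter.mp hx').2
    have hAS : ↑A ⊆ S := by
      intro x hx
      rcases Finset.mem_insert.mp hx with rfl | hx'
      · exact hw
      · exact hbS (by rw [← hbFb]; exact Finset.filter_subset _ _ hx')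
    have hsumA : ∑ x ∈ A, cc x • x = 0 := by
      rw [hA, Finset.sum_insert hwAf]
      have e1 : cc w = 1 := by simp [hcc]
      have e2 : ∑ x ∈ Af, cc x • x = ∑ x ∈ Af, c x • x := by
        refine Finset.sum_congr rfl fun x hx => ?_
        have hxw : x ≠ w := fun h => hwAf (h ▸ hx)
        rw [hcc]; simp [if_neg hxw]
      have e3 : ∑ x ∈ Af, c x • x = ∑ x ∈ bF, c x • x := by
        have heq := Finset.sum_filter_of_ne (s := bF) (f := fun x => c x • x)
          (p := fun x => c x ≠ 0) (fun x hx h hc0 => h (by simp [hc0]))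
        rw [hAf, heq]
      rw [e1, one_smul, e2, e3, hc, hmm w]
    obtain ⟨B, hBA, hBne, hBsum⟩ := claim A.card A rfl hAS cc hccne hsumA ⟨w, Finset.mem_insert_self _ _⟩
    have hwB : w ∈ B := by
      by_contra hwB
      have hBb : ∀ x ∈ B, x ∈ b := by
        intro x hx
        have hxA := hBA hx
        rcases Finset.mem_insert.mp hxA with rfl | hx'
        · exact absurd hx hwB
        · rw [← hbFb]; exact Finset.filter_subset _ _ hx'
      obtain ⟨x₀, hx₀⟩ := hBne
      have := linearIndependent_iff'.mp hbind
        (B.attach.map ⟨fun x => (⟨x.1, hBb x.1 x.2⟩ : b),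
          fun x y hxy => by
            simp only [Subtype.mk.injEq] at hxy
            exact Subtype.ext hxy⟩)
        (fun _ => (1 : k))
        (by
          rw [Finset.sum_map]
          simp only [Function.Embedding.coeFn_mk, one_smul]
          refine (Finset.sum_attach B (fun x => x)).trans ?_
          exact hBsum)
        ⟨x₀, hBb x₀ hx₀⟩
        (by
          simp only [Finset.mem_map, Finset.mem_attach, Function.Embedding.coeFn_mk]
          exact ⟨⟨x₀, hx₀⟩, trivial, rfl⟩)
      exact one_ne_zero this
    refine ⟨B.erase w, ?_, ?_⟩
    · simp only [Finset.coe_powerset, Set.mem_preimage, Set.mem_powerset_iff]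
      intro x hx
      have hx' := Finset.mem_erase.mp hx
      have hxA := hBA hx'.2
      rcases Finset.mem_insert.mp hxA with h | hxx
      · exact absurd h hx'.1
      · exact Finset.mem_coe.mpr (Finset.filter_subset _ _ hxx)
    · have hws := Finset.add_sum_erase B (fun x => x) hwB
      rw [hBsum] at hws
      have h := congrArg (fun z => w + z) hws.symm
      simp only [add_zero] at h
      rw [← add_assoc, hmm w, zero_add] at h
      exact h.symm

end WithAlgClosed

lemma char2_diff (a9 a10 a14 a18 b9 c9 b4 c4 a3 c3 : k[X])
    (h1 : b9^2 + a9*b9 + X*b4^4 + a10*b4^2 + a14*b4 + a18 = X^3*a3^4)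
    (h2 : c9^2 + a9*c9 + X*c4^4 + a10*c4^2 + a14*c4 + a18 = X^3*c3^4) :
    (b9+c9)^2 + a9*(b9+c9) + a10*(b4+c4)^2 + a14*(b4+c4) + X*(b4+c4)^4 + X^3*(a3+c3)^4 = 0 := by
  have htwo : (2:k[X]) = 0 := CharTwo.two_eq_zero
  linear_combination h1 + h2 + (b9*c9 + a10*b4*c4 + a18
    + X*(2*b4^3*c4 + 3*b4^2*c4^2 + 2*b4*c4^3)
    + X^3*(2*a3^3*c3 + 3*a3^2*c3^2 + 2*a3*c3^3)
    + X^3*a3^4 + X^3*c3^4 - 2*a18) * htwo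

lemma b5_unique (a10 b5 c5 a4 c4 : k[X]) (h1 : b5^2 + a10 = X*a4^2)
    (h2 : c5^2 + a10 = X*c4^2) : b5 = c5 := by
  have htwo : (2:k[X]) = 0 := CharTwo.two_eq_zero
  have hp : (b5+c5)^2 = X*(a4+c4)^2 := by
    linear_combination h1 + h2 + (b5*c5 - X*a4*c4 - a10)*htwo
  rcases eq_or_ne (a4+c4) 0 with hq | hq
  · rw [hq] at hp
    simp only [mul_zero, ne_eq, OfNat.ofNat_ne_zero, not_false_eq_true, pow_eq_zero_iff,
      zero_pow] at hp
    have : b5 + c5 = 0 := by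
      have := hp
      simpa [pow_eq_zero_iff] using this
    exact flip2 this
  · exfalso
    have hp0 : b5 + c5 ≠ 0 := by
      intro h0
      rw [h0] at hp
      have : X * (a4+c4)^2 = 0 := by rw [← hp]; ring
      rcases mul_eq_zero.mp this with hX | hq2
      · exact X_ne_zero hX
      · exact hq (sq_eq_zero_iff.mp hq2)
    have hd1 : ((b5+c5)^2).natDegree = 2 * (b5+c5).natDegree := natDegree_pow _ _
    have hd2 : (X * (a4+c4)^2).natDegree = 1 + 2 * (a4+c4).natDegree := by
      rw [natDegree_mul X_ne_zero (pow_ne_zero _ hq), natDegree_X, natDegree_pow]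
    rw [hp, hd2] at hd1
    omega

lemma collectL (a9 a10 a14 a18 b4 b5 b9 : k[X]) :
    (MvPolynomial.X 1 + MvPolynomial.C b5 * MvPolynomial.X 0 + MvPolynomial.C b9) ^ 2
      + MvPolynomial.C a9 * (MvPolynomial.X 1 + MvPolynomial.C b5 * MvPolynomial.X 0 + MvPolynomial.C b9)
      + MvPolynomial.C X * (MvPolynomial.X 0 + MvPolynomial.C b4) ^ 4
      + MvPolynomial.C a10 * (MvPolynomial.X 0 + MvPolynomial.C b4) ^ 2
      + MvPolynomial.C a14 * (MvPolynomial.X 0 + MvPolynomial.C b4) + MvPolynomial.C a18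
    = (MvPolynomial.X 1 : MvPolynomial (Fin 2) k[X]) ^ 2 + MvPolynomial.C a9 * MvPolynomial.X 1
      + MvPolynomial.C X * MvPolynomial.X 0 ^ 4
      + MvPolynomial.C (b5^2 + a10) * MvPolynomial.X 0 ^ 2
      + MvPolynomial.C (a9 * b5 + a14) * MvPolynomial.X 0
      + MvPolynomial.C (b9^2 + a9*b9 + X*b4^4 + a10*b4^2 + a14*b4 + a18) := by
  haveI : CharP (MvPolynomial (Fin 2) k[X]) 2 :=
    charP_of_injective_ringHom (MvPolynomial.C_injective _ _) 2
  have htwo : (2 : MvPolynomial (Fin 2) k[X]) = 0 := CharTwo.two_eq_zero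
  set x : MvPolynomial (Fin 2) k[X] := MvPolynomial.X 0 with hx
  set y : MvPolynomial (Fin 2) k[X] := MvPolynomial.X 1 with hy
  simp only [map_add, map_mul, map_pow]
  linear_combination (y * MvPolynomial.C b5 * x + y * MvPolynomial.C b9
      + MvPolynomial.C b5 * x * MvPolynomial.C b9
      + MvPolynomial.C X * (2 * x^3 * MvPolynomial.C b4 + 3 * x^2 * (MvPolynomial.C b4)^2
          + 2 * x * (MvPolynomial.C b4)^3)
      + MvPolynomial.C a10 * x * MvPolynomial.C b4) * htwo

lemma extractC (c2 c1 c0 d2 d1 d0 a9 tX : k[X])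
    (h : (MvPolynomial.X 1 : MvPolynomial (Fin 2) k[X]) ^ 2 + MvPolynomial.C a9 * MvPolynomial.X 1
      + MvPolynomial.C tX * MvPolynomial.X 0 ^ 4
      + MvPolynomial.C c2 * MvPolynomial.X 0 ^ 2 + MvPolynomial.C c1 * MvPolynomial.X 0
      + MvPolynomial.C c0
      = (MvPolynomial.X 1 : MvPolynomial (Fin 2) k[X]) ^ 2 + MvPolynomial.C a9 * MvPolynomial.X 1
      + MvPolynomial.C tX * MvPolynomial.X 0 ^ 4
      + MvPolynomial.C d2 * MvPolynomial.X 0 ^ 2 + MvPolynomial.C d1 * MvPolynomial.X 0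
      + MvPolynomial.C d0) : c2 = d2 ∧ c0 = d0 := by
  constructor
  · have := congrArg (MvPolynomial.coeff (Finsupp.single (0 : Fin 2) 2)) h
    simpa [MvPolynomial.coeff_add, MvPolynomial.coeff_C_mul, MvPolynomial.coeff_X_pow,
      MvPolynomial.coeff_X', MvPolynomial.coeff_C, Finsupp.single_eq_single_iff,
      Finsupp.single_eq_zero,
      (show ((0 : Fin 2 →₀ ℕ) = Finsupp.single (0:Fin 2) 2) ↔ False by
        simp [eq_comm, Finsupp.single_eq_zero])] using this
  · have := congrArg (MvPolynomial.coeff (0 : Fin 2 →₀ ℕ)) h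
    simpa [MvPolynomial.coeff_add, MvPolynomial.coeff_C_mul, MvPolynomial.coeff_X_pow,
      MvPolynomial.coeff_X', MvPolynomial.coeff_C, Finsupp.single_eq_single_iff,
      Finsupp.single_eq_zero] using this

lemma cancel2 (a b : k[X]) : a + (b + a) = b := by
  have htwo : (2:k[X]) = 0 := CharTwo.two_eq_zero
  linear_combination (a : k[X]) * htwo

end NormalFormAux

open NormalFormAux

/-- Corollary 5.3 of the paper: the set of admissible transformations
`(x, y) ↦ (x + b₄, y + b₅x + b₉)` converting the general equation to the
normal form is finite. -/
theorem normal_form_transformations_finite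
    (k : Type*) [Field k] [IsAlgClosed k] [CharP k 2]
    (a₉ a₁₀ a₁₄ a₁₈ : k[X])
    (h9 : a₉.natDegree ≤ 9) (h10 : a₁₀.natDegree ≤ 10)
    (h14 : a₁₄.natDegree ≤ 14) (h18 : a₁₈.natDegree ≤ 18) :
    {bs : k[X] × k[X] × k[X] |
      bs.1.natDegree ≤ 4 ∧ bs.2.1.natDegree ≤ 5 ∧ bs.2.2.natDegree ≤ 9 ∧
      ∃ a₄' a₃' A₁₄ : k[X],
        a₄'.natDegree ≤ 4 ∧ a₃'.natDegree ≤ 3 ∧ A₁₄.natDegree ≤ 14 ∧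
        (let x : MvPolynomial (Fin 2) k[X] := MvPolynomial.X 0
         let y : MvPolynomial (Fin 2) k[X] := MvPolynomial.X 1
         let Ct : k[X] → MvPolynomial (Fin 2) k[X] := MvPolynomial.C
         (y + Ct bs.2.1 * x + Ct bs.2.2) ^ 2 + Ct a₉ * (y + Ct bs.2.1 * x + Ct bs.2.2)
           + Ct X * (x + Ct bs.1) ^ 4 + Ct a₁₀ * (x + Ct bs.1) ^ 2
           + Ct a₁₄ * (x + Ct bs.1) + Ct a₁₈
         = y ^ 2 + Ct a₉ * y + Ct X * x ^ 4 + Ct X * (Ct a₄') ^ 2 * x ^ 2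
           + Ct A₁₄ * x + (Ct X) ^ 3 * (Ct a₃') ^ 4)}.Finite := by
  classical
  rcases Set.eq_empty_or_nonempty {bs : k[X] × k[X] × k[X] |
      bs.1.natDegree ≤ 4 ∧ bs.2.1.natDegree ≤ 5 ∧ bs.2.2.natDegree ≤ 9 ∧
      ∃ a₄' a₃' A₁₄ : k[X],
        a₄'.natDegree ≤ 4 ∧ a₃'.natDegree ≤ 3 ∧ A₁₄.natDegree ≤ 14 ∧
        (let x : MvPolynomial (Fin 2) k[X] := MvPolynomial.X 0
         let y : MvPolynomial (Fin 2) k[X] := MvPolynomial.X 1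
         let Ct : k[X] → MvPolynomial (Fin 2) k[X] := MvPolynomial.C
         (y + Ct bs.2.1 * x + Ct bs.2.2) ^ 2 + Ct a₉ * (y + Ct bs.2.1 * x + Ct bs.2.2)
           + Ct X * (x + Ct bs.1) ^ 4 + Ct a₁₀ * (x + Ct bs.1) ^ 2
           + Ct a₁₄ * (x + Ct bs.1) + Ct a₁₈
         = y ^ 2 + Ct a₉ * y + Ct X * x ^ 4 + Ct X * (Ct a₄') ^ 2 * x ^ 2
           + Ct A₁₄ * x + (Ct X) ^ 3 * (Ct a₃') ^ 4)} with hemp | hne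
  · rw [hemp]; exact Set.finite_empty
  · obtain ⟨⟨β4, β5, β9⟩, hβ⟩ := hne
    simp only [Set.mem_setOf_eq] at hβ
    obtain ⟨hβ4, hβ5, hβ9, α4, α3, Α14, hα4deg, hα3deg, hΑdeg, hβeq⟩ := hβ
    have hrhsβ : (MvPolynomial.X 1 : MvPolynomial (Fin 2) k[X]) ^ 2
        + MvPolynomial.C a₉ * MvPolynomial.X 1
        + MvPolynomial.C X * MvPolynomial.X 0 ^ 4
        + MvPolynomial.C X * (MvPolynomial.C α4) ^ 2 * MvPolynomial.X 0 ^ 2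
        + MvPolynomial.C Α14 * MvPolynomial.X 0
        + (MvPolynomial.C X) ^ 3 * (MvPolynomial.C α3) ^ 4
        = (MvPolynomial.X 1 : MvPolynomial (Fin 2) k[X]) ^ 2
        + MvPolynomial.C a₉ * MvPolynomial.X 1
        + MvPolynomial.C X * MvPolynomial.X 0 ^ 4
        + MvPolynomial.C (X * α4 ^ 2) * MvPolynomial.X 0 ^ 2
        + MvPolynomial.C Α14 * MvPolynomial.X 0
        + MvPolynomial.C (X ^ 3 * α3 ^ 4) := by
      simp only [map_mul, map_pow]
    have hβeq2 := hβeq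
    rw [collectL, hrhsβ] at hβeq2
    obtain ⟨E2β, E0β⟩ := extractC _ _ _ _ _ _ _ _ hβeq2
    -- main inclusion
    apply Set.Finite.subset (Set.Finite.image (fun w : MM k => (β4 + w.2.1, β5, β9 + w.1))
      (sol_finite tauM tauM_smul tauM_inj
        (bigL (ee a₉) (so a₉) (ee a₁₀) (so a₁₀) (ee a₁₄) (so a₁₄)) VV))
    rintro ⟨b4, b5, b9⟩ hbs
    simp only [Set.mem_setOf_eq] at hbs
    obtain ⟨h4d, h5d, h9d, a4', a3', A14, h4pd, h3pd, hApd, heq⟩ := hbs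
    have hrhs : (MvPolynomial.X 1 : MvPolynomial (Fin 2) k[X]) ^ 2
        + MvPolynomial.C a₉ * MvPolynomial.X 1
        + MvPolynomial.C X * MvPolynomial.X 0 ^ 4
        + MvPolynomial.C X * (MvPolynomial.C a4') ^ 2 * MvPolynomial.X 0 ^ 2
        + MvPolynomial.C A14 * MvPolynomial.X 0
        + (MvPolynomial.C X) ^ 3 * (MvPolynomial.C a3') ^ 4
        = (MvPolynomial.X 1 : MvPolynomial (Fin 2) k[X]) ^ 2
        + MvPolynomial.C a₉ * MvPolynomial.X 1
        + MvPolynomial.C X * MvPolynomial.X 0 ^ 4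
        + MvPolynomial.C (X * a4' ^ 2) * MvPolynomial.X 0 ^ 2
        + MvPolynomial.C A14 * MvPolynomial.X 0
        + MvPolynomial.C (X ^ 3 * a3' ^ 4) := by
      simp only [map_mul, map_pow]
    have heq2 := heq
    rw [collectL, hrhs] at heq2
    obtain ⟨E2s, E0s⟩ := extractC _ _ _ _ _ _ _ _ heq2
    have hb5 : b5 = β5 := b5_unique a₁₀ b5 β5 a4' α4 E2s E2β
    have hF := char2_diff a₉ a₁₀ a₁₄ a₁₈ b9 β9 b4 β4 a3' α3 E0s E0β
    refine ⟨(b9+β9, b4+β4, ph (b4+β4), ph (a3'+α3)), ⟨?_, ?_⟩, ?_⟩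
    · exact key_step a₉ a₁₀ a₁₄ (b9+β9) (b4+β4) (a3'+α3) hF
    · apply mem_VV
      · exact le_trans (natDegree_add_le _ _) (max_le h9d hβ9)
      · exact le_trans (natDegree_add_le _ _) (max_le h4d hβ4)
      · exact le_trans (ph_natDegree_le _)
          (le_trans (natDegree_add_le _ _) (max_le h4d hβ4))
      · exact le_trans (ph_natDegree_le _)
          (le_trans (natDegree_add_le _ _) (max_le h3pd hα3deg))
    · show (β4 + (b4 + β4), β5, β9 + (b9 + β9)) = (b4, b5, b9)
      rw [cancel2, cancel2, hb5]
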